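/- Let X and Y be measurable spaces, let κ be a Markov kernel from X to Y, let μ₁ and ν₁ be probability measures on X with μ₁ ≪ ν₁ and KL(μ₁‖ν₁) < ∞, let 0 ≤ a < b < ∞, and let L : X × Y → ℝ be a measurable function with a ≤ L ≤ b. Then ∫ L d(μ₁ ⊗ κ) − ∫ L d(ν₁ ⊗ κ) ≤ KL(μ₁ ‖ ν₁) + 2·log((e^a + e^b)/2) − a − b. -/

import Mathlib

open MeasureTheory ProbabilityTheory Real Classical
open scoped ProbabilityTheory

/-- The Kullback--Leibler divergence `KL(μ‖ν) = ∫ log (dμ/dν) dμ`, taking the value `⊤`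
unless `μ ≪ ν` and the log-likelihood ratio is integrable. -/
noncomputable def klDiv {Ω : Type*} [MeasurableSpace Ω] (μ ν : Measure Ω) : EReal :=
  if μ ≪ ν ∧ Integrable (llr μ ν) μ then ((∫ ω, llr μ ν ω ∂μ : ℝ) : EReal) else ⊤

/-- Gibbs' inequality: the KL integral is nonnegative. -/
lemma integral_llr_nonneg' {Ω : Type*} [MeasurableSpace Ω] (μ ν : Measure Ω)
    [IsProbabilityMeasure μ] [IsProbabilityMeasure ν]
    (hac : μ ≪ ν) (hint : Integrable (llr μ ν) μ) :
    0 ≤ ∫ ω, llr μ ν ω ∂μ := by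
  have h_eq : (fun x ↦ exp (- llr μ ν x)) =ᵐ[μ] fun x ↦ (ν.rnDeriv μ x).toReal :=
    exp_neg_llr hac
  have h_int_exp : Integrable (fun x ↦ exp (- llr μ ν x)) μ :=
    (Measure.integrable_toReal_rnDeriv (μ := ν) (ν := μ)).congr h_eq.symm
  -- Jensen for exp:
  have h_jensen : exp (∫ x, - llr μ ν x ∂μ) ≤ ∫ x, exp (- llr μ ν x) ∂μ := by
    have := convexOn_exp.map_integral_le (μ := μ) (f := fun x ↦ - llr μ ν x)
      continuous_exp.continuousOn isClosed_univ (ae_of_all _ fun _ ↦ trivial)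
      hint.neg (by exact h_int_exp)
    simpa using this
  have h_le_one : ∫ x, exp (- llr μ ν x) ∂μ ≤ 1 := by
    rw [integral_congr_ae h_eq]
    rw [Measure.integral_toReal_rnDeriv']
    have h1 : (ν Set.univ).toReal = 1 := by simp
    have h2 : 0 ≤ (ν.singularPart μ Set.univ).toReal := ENNReal.toReal_nonneg
    simp only [measureReal_def]
    linarith
  have : exp (∫ x, - llr μ ν x ∂μ) ≤ 1 := h_jensen.trans h_le_one
  rw [← Real.exp_zero] at this
  have := Real.exp_le_exp.mp this
  rw [integral_neg] at this
  linarith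

/-- The Donsker--Varadhan inequality. -/
lemma donsker_varadhan {Ω : Type*} [MeasurableSpace Ω] (μ ν : Measure Ω)
    [IsProbabilityMeasure μ] [IsProbabilityMeasure ν]
    (hac : μ ≪ ν) (hint : Integrable (llr μ ν) μ)
    (f : Ω → ℝ) (hfμ : Integrable f μ) (hfν : Integrable (fun x ↦ exp (f x)) ν) :
    ∫ x, f x ∂μ - Real.log (∫ x, exp (f x) ∂ν) ≤ ∫ x, llr μ ν x ∂μ := by
  have hP : IsProbabilityMeasure (ν.tilted f) := isProbabilityMeasure_tilted hfν
  have hac' : μ ≪ ν.tilted f := hac.trans (absolutelyContinuous_tilted hfν)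
  have hint' : Integrable (llr μ (ν.tilted f)) μ :=
    integrable_llr_tilted_right hac hfμ hint hfν
  have h0 : 0 ≤ ∫ x, llr μ (ν.tilted f) x ∂μ := integral_llr_nonneg' μ _ hac' hint'
  rw [integral_llr_tilted_right hac hfμ hfν hint] at h0
  linarith

theorem expected_loss_diff_compProd_le_klDiv_add_const
    {X Y : Type*} [MeasurableSpace X] [MeasurableSpace Y]
    (κ : Kernel X Y) [IsMarkovKernel κ]
    (μ₁ ν₁ : Measure X) [IsProbabilityMeasure μ₁] [IsProbabilityMeasure ν₁]
    (hac : μ₁ ≪ ν₁) (hfin : klDiv μ₁ ν₁ < ⊤)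
    (a b : ℝ) (ha : 0 ≤ a) (hab : a < b)
    (L : X × Y → ℝ) (hL : Measurable L) (hLa : ∀ p, a ≤ L p) (hLb : ∀ p, L p ≤ b) :
    ∫ p, L p ∂(μ₁ ⊗ₘ κ) - ∫ p, L p ∂(ν₁ ⊗ₘ κ) ≤
      (klDiv μ₁ ν₁).toReal + 2 * Real.log ((Real.exp a + Real.exp b) / 2) - a - b := by
  -- Extract integrability of llr from finiteness of klDiv
  have hint : Integrable (llr μ₁ ν₁) μ₁ := by
    by_contra h
    rw [klDiv, if_neg (fun hh ↦ h hh.2)] at hfin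
    exact (lt_irrefl _ hfin)
  have hkl : (klDiv μ₁ ν₁).toReal = ∫ x, llr μ₁ ν₁ x ∂μ₁ := by
    rw [klDiv, if_pos ⟨hac, hint⟩]; simp
  set f : X → ℝ := fun x ↦ ∫ y, L (x, y) ∂(κ x) with hf_def
  have hf_meas : StronglyMeasurable f :=
    hL.stronglyMeasurable.integral_kernel_prod_right'
  -- integrability of L under the compProds
  have habs : ∀ p, ‖L p‖ ≤ b := fun p ↦ by
    rw [Real.norm_eq_abs, abs_of_nonneg (ha.trans (hLa p))]; exact hLb p
  have hLint : ∀ (ρ : Measure X) [IsProbabilityMeasure ρ], Integrable L (ρ ⊗ₘ κ) := by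
    intro ρ hρ
    exact (integrable_const b).mono' hL.aestronglyMeasurable (ae_of_all _ habs)
  -- f bounds
  have hfa : ∀ x, a ≤ f x := fun x ↦ by
    have : a = ∫ _, a ∂(κ x) := by simp
    rw [this]
    refine integral_mono (integrable_const a) ?_ fun y ↦ hLa (x, y)
    exact (integrable_const b).mono' (hL.comp measurable_prodMk_left).aestronglyMeasurable
      (ae_of_all _ fun y ↦ habs (x, y))
  have hfb : ∀ x, f x ≤ b := fun x ↦ by
    have hb : b = ∫ _, b ∂(κ x) := by simp
    calc f x ≤ ∫ _, b ∂(κ x) := by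
          refine integral_mono ?_ (integrable_const b) fun y ↦ hLb (x, y)
          exact (integrable_const b).mono' (hL.comp measurable_prodMk_left).aestronglyMeasurable
            (ae_of_all _ fun y ↦ habs (x, y))
      _ = b := by simp
  have hf_int : ∀ (ρ : Measure X) [IsProbabilityMeasure ρ], Integrable f ρ := by
    intro ρ _
    refine (integrable_const b).mono' hf_meas.aestronglyMeasurable (ae_of_all _ fun x ↦ ?_)
    rw [Real.norm_eq_abs, abs_of_nonneg (ha.trans (hfa x))]; exact hfb x
  have hef_int : Integrable (fun x ↦ exp (f x)) ν₁ := by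
    refine (integrable_const (exp b)).mono'
      (Real.continuous_exp.comp_stronglyMeasurable hf_meas).aestronglyMeasurable
      (ae_of_all _ fun x ↦ ?_)
    rw [Real.norm_eq_abs, abs_of_nonneg (exp_pos _).le]
    exact exp_le_exp.mpr (hfb x)
  -- reduce compProd integrals
  have hμint : ∫ p, L p ∂(μ₁ ⊗ₘ κ) = ∫ x, f x ∂μ₁ := Measure.integral_compProd (hLint μ₁)
  have hνint : ∫ p, L p ∂(ν₁ ⊗ₘ κ) = ∫ x, f x ∂ν₁ := Measure.integral_compProd (hLint ν₁)
  rw [hμint, hνint, hkl]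
  -- Donsker--Varadhan
  have hDV : ∫ x, f x ∂μ₁ - Real.log (∫ x, exp (f x) ∂ν₁) ≤ ∫ x, llr μ₁ ν₁ x ∂μ₁ :=
    donsker_varadhan μ₁ ν₁ hac hint f (hf_int μ₁) hef_int
  -- Now bound log ∫ exp f dν₁ - ∫ f dν₁ by the constant
  set m := ∫ x, f x ∂ν₁ with hm_def
  have hma : a ≤ m := by
    have : a = ∫ _, a ∂ν₁ := by simp
    rw [this]; exact integral_mono (integrable_const a) (hf_int ν₁) hfa
  set S := exp a + exp b with hS_def
  set t := exp (a + b - m) with ht_def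
  -- pointwise: exp (f x) ≤ S - exp (a + b - f x)
  have hpt : ∀ x, exp (f x) ≤ S - exp (a + b - f x) := by
    intro x
    have h1 : (0:ℝ) ≤ (exp (f x) - exp a) * (exp (b - f x) - 1) := by
      apply mul_nonneg
      · have := exp_le_exp.mpr (hfa x); linarith
      · have : (1:ℝ) ≤ exp (b - f x) := by
          rw [← Real.exp_zero]; exact exp_le_exp.mpr (by linarith [hfb x])
        linarith
    have he : exp (f x) * exp (b - f x) = exp b := by rw [← Real.exp_add]; ring_nf
    have he2 : exp a * exp (b - f x) = exp (a + b - f x) := by rw [← Real.exp_add]; ring_nf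
    nlinarith [h1, he, he2]
  -- integrate: ∫ exp f dν ≤ S - exp (a + b - m) using Jensen
  have h_int_e2 : Integrable (fun x ↦ exp (a + b - f x)) ν₁ := by
    refine (integrable_const (exp b)).mono'
      ((Real.continuous_exp.comp (by continuity : Continuous (fun r : ℝ ↦ a + b - r))).comp_stronglyMeasurable
        hf_meas).aestronglyMeasurable (ae_of_all _ fun x ↦ ?_)
    rw [Real.norm_eq_abs, abs_of_nonneg (exp_pos _).le]
    exact exp_le_exp.mpr (by linarith [hfa x])
  have h_jensen2 : t ≤ ∫ x, exp (a + b - f x) ∂ν₁ := by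
    have := convexOn_exp.map_integral_le (μ := ν₁) (f := fun x ↦ a + b - f x)
      continuous_exp.continuousOn isClosed_univ (ae_of_all _ fun _ ↦ trivial)
      ((integrable_const (a + b)).sub (hf_int ν₁)) (by exact h_int_e2)
    have heq : ∫ x, (a + b - f x) ∂ν₁ = a + b - m := by
      rw [integral_sub (integrable_const (a + b)) (hf_int ν₁)]; simp [hm_def]
    rw [heq] at this
    simpa [ht_def] using this
  have h_main : ∫ x, exp (f x) ∂ν₁ ≤ S - t := by
    have h1 : ∫ x, exp (f x) ∂ν₁ ≤ ∫ x, (S - exp (a + b - f x)) ∂ν₁ :=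
      integral_mono hef_int ((integrable_const S).sub h_int_e2) hpt
    have h2 : ∫ x, (S - exp (a + b - f x)) ∂ν₁ = S - ∫ x, exp (a + b - f x) ∂ν₁ := by
      rw [integral_sub (integrable_const S) h_int_e2]; simp
    rw [h2] at h1
    linarith
  have ht_pos : 0 < t := exp_pos _
  have hSt_pos : 0 < S - t := lt_of_lt_of_le (integral_exp_pos hef_int) h_main
  have h_log : Real.log (∫ x, exp (f x) ∂ν₁) ≤ Real.log (S - t) :=
    Real.log_le_log (integral_exp_pos hef_int) h_main
  -- AM-GM: (S - t) * t ≤ (S/2)^2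
  have h_amgm : (S - t) * t ≤ (S / 2) ^ 2 := by nlinarith [sq_nonneg (S - 2 * t)]
  have hS_pos : 0 < S := by positivity
  have h_log2 : Real.log (S - t) + Real.log t ≤ 2 * Real.log (S / 2) := by
    rw [← Real.log_mul hSt_pos.ne' ht_pos.ne']
    calc Real.log ((S - t) * t) ≤ Real.log ((S / 2) ^ 2) :=
          Real.log_le_log (by positivity) h_amgm
      _ = 2 * Real.log (S / 2) := by
          rw [Real.log_pow]; push_cast; ring
  have h_logt : Real.log t = a + b - m := by rw [ht_def, Real.log_exp]
  -- put it together
  have hfinal : Real.log (∫ x, exp (f x) ∂ν₁) - m ≤ 2 * Real.log (S / 2) - a - b := by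
    have := h_log2
    rw [h_logt] at this
    linarith [h_log]
  linarith [hDV, hfinal]
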